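/- arXiv:1710.07250 — 5 statements merged into one kernel-verified Lean document; each statement's English description precedes it below -/
import Mathlib

section
/- Let q be a power of the prime p and n = p²s for a positive integer s. Let f ∈ F_q[x] be a monic polynomial dividing x^s − 1. Then α ∈ F_{q^n} satisfies m_α(x) = (x^n − 1)/f(x) if and only if β = Tr_{q^n/q^{ps}}(α) = Σ_{i=0}^{p−1} α^{q^{psi}} satisfies m_β(x) = (x^{ps} − 1)/f(x). -/
open Polynomial

/-- The `q`-associate of `f` applied to `x`: `L_f(x) = Σᵢ aᵢ x^(q^i)`. -/
noncomputable def qAssoc (q : ℕ) {F E : Type*} [CommSemiring F] [CommSemiring E] [Algebra F E]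
    (f : Polynomial F) (x : E) : E :=
  f.sum fun i a => algebraMap F E a * x ^ q ^ i

/-- `g` is the `F_q`-order of `α`: `g` is the monic generator of the ideal of
polynomials `f` with `L_f(α) = 0`. -/
def IsFqOrder (q : ℕ) {F E : Type*} [CommSemiring F] [CommSemiring E] [Algebra F E]
    (α : E) (g : Polynomial F) : Prop :=
  g.Monic ∧ ∀ f : Polynomial F, qAssoc q f α = 0 ↔ g ∣ f

/-- `α` is `k`-normal over `F`: the span of the conjugates `α^(q^i)`, `0 ≤ i ≤ n-1`,
has dimension `n - k`. -/
def IskNormal (q n k : ℕ) (F : Type*) {E : Type*} [Field F] [Field E] [Algebra F E]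
    (α : E) : Prop :=
  Module.finrank F (Submodule.span F (Set.range fun i : Fin n => α ^ q ^ (i : ℕ))) = n - k

/-- `α` is a primitive element of the finite field `E`: it generates `Eˣ`. -/
def IsPrimitiveElt {E : Type*} [Field E] (α : E) : Prop :=
  ∀ x : E, x ≠ 0 → ∃ m : ℕ, x = α ^ m

-- Number of squarefree divisors of a natural number.
open Classical in
noncomputable def Wnat (t : ℕ) : ℕ := (t.divisors.filter Squarefree).card

/-- Number of monic squarefree divisors of a polynomial. -/
noncomputable def Wpoly {F : Type*} [Field F] (g : Polynomial F) : ℕ :=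
  Set.ncard {h : Polynomial F | h.Monic ∧ Squarefree h ∧ h ∣ g}

/-- Polynomial Euler function `Φ(g) = |(F[x]/⟨g⟩)ˣ|`. -/
noncomputable def PhiPoly {F : Type*} [Field F] (g : Polynomial F) : ℕ :=
  Nat.card ((Polynomial F ⧸ Ideal.span {g})ˣ)

-- The polynomial Möbius function over `F`.
open Classical in
noncomputable def muq {F : Type*} [Field F] (f : Polynomial F) : ℤ :=
  if Squarefree f then
    (-1) ^ (UniqueFactorizationMonoid.normalizedFactors f).toFinset.card
  else 0

/-- The `q`-associate of `f` as a polynomial with coefficients in the extension `E`. -/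
noncomputable def LPoly (q : ℕ) {F : Type*} (E : Type*) [CommSemiring F] [CommSemiring E]
    [Algebra F E] (f : Polynomial F) : Polynomial E :=
  f.sum fun i a => Polynomial.C (algebraMap F E a) * Polynomial.X ^ q ^ i

-- `Ψ_f = ∏_{α : m_α = f} (X - α)` over `E`.
open Classical in
noncomputable def PsiPoly (q : ℕ) {F : Type*} (E : Type*) [Field F] [Field E] [Fintype E]
    [Algebra F E] (f : Polynomial F) : Polynomial E :=
  ∏ α ∈ Finset.univ.filter (fun α : E => IsFqOrder q α f), (X - C α)

/-- `n` is `F_q`-practical: `x^n - 1` has a divisor of each degree `1 ≤ k ≤ n-1` over `F`. -/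
def FqPractical (F : Type*) [Field F] (n : ℕ) : Prop :=
  ∀ k : ℕ, 1 ≤ k → k ≤ n - 1 →
    ∃ f : Polynomial F, f.natDegree = k ∧ f ∣ (X ^ n - 1 : Polynomial F)


section StmtAux

variable {F E : Type*} [Field F] [Fintype F] [Field E] [Algebra F E]

/-- Frobenius `x ↦ x ^ p ^ e` as an `F`-linear endomorphism of `E`. -/
noncomputable def frobL (p e : ℕ) [Fact p.Prime] [CharP E p]
    (hq : Fintype.card F = p ^ e) : E →ₗ[F] E where
  toFun x := x ^ p ^ e
  map_add' x y := add_pow_char_pow x y p e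
  map_smul' c x := by
    simp only [RingHom.id_apply, Algebra.smul_def, mul_pow, ← map_pow]
    rw [← hq, FiniteField.pow_card]

@[simp] lemma frobL_apply (p e : ℕ) [Fact p.Prime] [CharP E p]
    (hq : Fintype.card F = p ^ e) (x : E) : frobL p e hq x = x ^ p ^ e := rfl

lemma frobL_pow (p e : ℕ) [Fact p.Prime] [CharP E p]
    (hq : Fintype.card F = p ^ e) (i : ℕ) (x : E) :
    (frobL p e hq ^ i) x = x ^ (p ^ e) ^ i := by
  induction i generalizing x with
  | zero => simp
  | succ n ih =>
    rw [pow_succ, Module.End.mul_apply, ih, frobL_apply, ← pow_mul, ← pow_succ']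

lemma qAssoc_eq_aeval (p e : ℕ) [Fact p.Prime] [CharP E p]
    (hq : Fintype.card F = p ^ e) (g : Polynomial F) (x : E) :
    qAssoc (p ^ e) g x = Polynomial.aeval (frobL p e hq) g x := by
  rw [Polynomial.aeval_endomorphism]
  simp only [qAssoc, frobL_pow, Algebra.smul_def]

lemma qAssoc_mul (p e : ℕ) [Fact p.Prime] [CharP E p]
    (hq : Fintype.card F = p ^ e) (g h : Polynomial F) (x : E) :
    qAssoc (p ^ e) (g * h) x = qAssoc (p ^ e) g (qAssoc (p ^ e) h x) := by
  rw [qAssoc_eq_aeval p e hq, qAssoc_eq_aeval p e hq, qAssoc_eq_aeval p e hq,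
    map_mul, Module.End.mul_apply]

lemma qAssoc_add (p e : ℕ) [Fact p.Prime] [CharP E p]
    (hq : Fintype.card F = p ^ e) (g h : Polynomial F) (x : E) :
    qAssoc (p ^ e) (g + h) x = qAssoc (p ^ e) g x + qAssoc (p ^ e) h x := by
  rw [qAssoc_eq_aeval p e hq, qAssoc_eq_aeval p e hq, qAssoc_eq_aeval p e hq,
    map_add, LinearMap.add_apply]

lemma qAssoc_zero_right (p e : ℕ) [Fact p.Prime] [CharP E p]
    (hq : Fintype.card F = p ^ e) (g : Polynomial F) :
    qAssoc (p ^ e) g (0 : E) = 0 := by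
  rw [qAssoc_eq_aeval p e hq]
  exact map_zero _

end StmtAux

/-- Let `n = p²s` and `f` a monic divisor of `x^s - 1`. Then
`m_α = (x^n-1)/f` iff `β = Tr_{q^n/q^{ps}}(α) = Σ_{i<p} α^(q^{psi})` has `m_β = (x^{ps}-1)/f`. -/
theorem stmt2 {F E : Type*} [Field F] [Fintype F] [Field E] [Fintype E] [Algebra F E]
    (p e q s : ℕ) (hp : p.Prime) (hqe : q = p ^ e) (hq : Fintype.card F = q)
    (hs : 0 < s) (hdim : Module.finrank F E = p ^ 2 * s)
    (f : Polynomial F) (hf : f.Monic) (hfd : f ∣ (X ^ s - 1 : Polynomial F))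
    (α : E) :
    IsFqOrder q α ((X ^ (p ^ 2 * s) - 1 : Polynomial F) /ₘ f) ↔
      IsFqOrder q (∑ i ∈ Finset.range p, α ^ q ^ (p * s * i))
        ((X ^ (p * s) - 1 : Polynomial F) /ₘ f) := by
  classical
  subst hqe
  haveI hfp : Fact p.Prime := ⟨hp⟩
  -- characteristic
  have hrc : ringChar F = p := by
    obtain ⟨n, hrp, hcard⟩ := FiniteField.card F (ringChar F)
    have h1 : ringChar F ∣ p ^ e := by
      rw [← hq, hcard]; exact dvd_pow_self _ n.2.ne'
    exact (Nat.prime_dvd_prime_iff_eq hrp hp).mp (hrp.dvd_of_dvd_pow h1)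
  haveI hFp : CharP F p := hrc ▸ ringChar.charP F
  haveI hEp : CharP E p := charP_of_injective_algebraMap (algebraMap F E).injective p
  -- abbreviations
  set u : Polynomial F := X ^ s - 1 with hu_def
  set m : Polynomial F := (X ^ (p ^ 2 * s) - 1) /ₘ f with hm_def
  set g1 : Polynomial F := (X ^ (p * s) - 1) /ₘ f with hg1_def
  set hpol : Polynomial F := ∑ i ∈ Finset.range p, X ^ (p * s * i) with hpol_def
  have hu_monic : u.Monic := by simpa using monic_X_pow_sub_C (1 : F) hs.ne'
  have hu_ne : u ≠ 0 := hu_monic.ne_zero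
  have hps_ne : p * s ≠ 0 := Nat.mul_ne_zero hp.pos.ne' hs.ne'
  have hp2s_ne : p ^ 2 * s ≠ 0 := Nat.mul_ne_zero (pow_ne_zero 2 hp.pos.ne') hs.ne'
  have hXps_monic : (X ^ (p * s) - 1 : Polynomial F).Monic := by
    simpa using monic_X_pow_sub_C (1 : F) hps_ne
  have hXp2s_monic : (X ^ (p ^ 2 * s) - 1 : Polynomial F).Monic := by
    simpa using monic_X_pow_sub_C (1 : F) hp2s_ne
  -- char p identities
  have hup : u ^ p = X ^ (p * s) - 1 := by
    rw [hu_def, sub_pow_char, one_pow, ← pow_mul, mul_comm s p]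
  have hup2 : u ^ p ^ 2 = X ^ (p ^ 2 * s) - 1 := by
    rw [hu_def, sub_pow_char_pow, one_pow, ← pow_mul, mul_comm s (p ^ 2)]
  -- exact divisions
  have hfu2 : f ∣ X ^ (p ^ 2 * s) - 1 := by
    rw [← hup2]; exact hfd.trans (dvd_pow_self u (pow_ne_zero 2 hp.pos.ne'))
  have hfu1 : f ∣ X ^ (p * s) - 1 := by
    rw [← hup]; exact hfd.trans (dvd_pow_self u hp.pos.ne')
  have hfm : f * m = X ^ (p ^ 2 * s) - 1 := by
    have h := modByMonic_add_div (X ^ (p ^ 2 * s) - 1 : Polynomial F) f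
    rwa [(modByMonic_eq_zero_iff_dvd hf).mpr hfu2, zero_add] at h
  have hfg1 : f * g1 = X ^ (p * s) - 1 := by
    have h := modByMonic_add_div (X ^ (p * s) - 1 : Polynomial F) f
    rwa [(modByMonic_eq_zero_iff_dvd hf).mpr hfu1, zero_add] at h
  have hm_monic : m.Monic := hf.of_mul_monic_left (hfm ▸ hXp2s_monic)
  have hg1_monic : g1.Monic := hf.of_mul_monic_left (hfg1 ▸ hXps_monic)
  -- geometric sum identity
  have hgeom : hpol * (X ^ (p * s) - 1) = X ^ (p ^ 2 * s) - 1 := by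
    have h := geom_sum_mul ((X : Polynomial F) ^ (p * s)) p
    simp only [← pow_mul] at h
    rw [show p * s * p = p ^ 2 * s by ring] at h
    exact h
  have hm_eq : m = g1 * hpol := by
    apply mul_left_cancel₀ hf.ne_zero
    rw [hfm, ← hgeom, ← hfg1]; ring
  have hpol_ne : hpol ≠ 0 := by
    intro h
    rw [h, zero_mul] at hgeom
    exact hXp2s_monic.ne_zero hgeom.symm
  have hpolu : hpol = u ^ (p ^ 2 - p) := by
    apply mul_left_cancel₀ (pow_ne_zero p hu_ne)
    rw [← pow_add, Nat.add_sub_cancel' (Nat.le_self_pow two_ne_zero p), hup2, hup, mul_comm]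
    exact hgeom
  -- the trace β as a q-associate
  have hbeta : (∑ i ∈ Finset.range p, α ^ (p ^ e) ^ (p * s * i)) = qAssoc (p ^ e) hpol α := by
    rw [qAssoc_eq_aeval p e hq, hpol_def, map_sum, LinearMap.coe_sum, Finset.sum_apply]
    simp [frobL_pow]
  -- α is annihilated by X^(p²s) - 1
  have hXn : qAssoc (p ^ e) (X ^ (p ^ 2 * s) - 1 : Polynomial F) α = 0 := by
    rw [qAssoc_eq_aeval p e hq]
    have hcard : Fintype.card E = (p ^ e) ^ (p ^ 2 * s) := by
      rw [Module.card_eq_pow_finrank (K := F) (V := E), hq, hdim]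
    have heval : (Polynomial.aeval (frobL p e hq)) (X ^ (p ^ 2 * s) - 1 : Polynomial F) α
        = α ^ (p ^ e) ^ (p ^ 2 * s) - α := by
      simp [map_sub, map_pow, aeval_X, LinearMap.sub_apply, frobL_pow, Module.End.one_apply]
    rw [heval, ← hcard, FiniteField.pow_card, sub_self]
  constructor
  · rintro ⟨-, hord⟩
    refine ⟨hg1_monic, fun g => ?_⟩
    rw [hbeta, ← qAssoc_mul p e hq, hord, hm_eq]
    exact mul_dvd_mul_iff_right hpol_ne
  · rintro ⟨-, hbord⟩
    -- annihilator ideal of α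
    let I : Ideal (Polynomial F) :=
      { carrier := {g | qAssoc (p ^ e) g α = 0}
        add_mem' := fun {a b} ha hb => by
          simp only [Set.mem_setOf_eq] at *
          rw [qAssoc_add p e hq, ha, hb, add_zero]
        zero_mem' := by
          simp only [Set.mem_setOf_eq, qAssoc, Polynomial.sum_zero_index]
        smul_mem' := fun t {g} hg => by
          simp only [Set.mem_setOf_eq] at *
          rw [smul_eq_mul, qAssoc_mul p e hq, hg, qAssoc_zero_right p e hq] }
    obtain ⟨c0, hc0⟩ := (IsPrincipalIdealRing.principal I).principal
    have hmem : ∀ g : Polynomial F, qAssoc (p ^ e) g α = 0 ↔ c0 ∣ g := by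
      intro g
      have h : g ∈ I ↔ c0 ∣ g := by rw [hc0]; exact Ideal.mem_span_singleton
      exact h
    have hc0_ne : c0 ≠ 0 := by
      rintro rfl
      have h := (hmem _).mp hXn
      rw [zero_dvd_iff] at h
      exact hXp2s_monic.ne_zero h
    set c : Polynomial F := normalize c0 with hc_def
    have hc_monic : c.Monic := monic_normalize hc0_ne
    have hc_ne : c ≠ 0 := hc_monic.ne_zero
    have hc : ∀ g : Polynomial F, qAssoc (p ^ e) g α = 0 ↔ c ∣ g := fun g =>
      (hmem g).trans normalize_dvd_iff.symm
    have hcomb : ∀ g : Polynomial F, c ∣ g * hpol ↔ g1 ∣ g := by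
      intro g
      rw [← hc, qAssoc_mul p e hq, ← hbeta, hbord]
    have hcm : c ∣ g1 * hpol := (hcomb g1).mpr dvd_rfl
    set d : Polynomial F := EuclideanDomain.gcd c hpol with hd_def
    obtain ⟨w, hw⟩ : d ∣ c := EuclideanDomain.gcd_dvd_left c hpol
    obtain ⟨v, hv⟩ : d ∣ hpol := EuclideanDomain.gcd_dvd_right c hpol
    have hd_ne : d ≠ 0 := by
      rintro h
      rw [h, zero_mul] at hw
      exact hc_ne hw
    have h6 : g1 ∣ w := (hcomb w).mp ⟨v, by rw [hw, hv]; ring⟩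
    obtain ⟨t, ht⟩ := h6
    obtain ⟨r, hr⟩ := hcm
    have h7 : hpol = d * t * r := by
      apply mul_left_cancel₀ hg1_monic.ne_zero
      rw [hr, hw, ht]; ring
    have h8 : d * t ∣ d :=
      EuclideanDomain.dvd_gcd ⟨g1, by rw [hw, ht]; ring⟩ ⟨r, h7⟩
    have htu : IsUnit t := by
      refine isUnit_of_dvd_one ((mul_dvd_mul_iff_left hd_ne).mp ?_)
      simpa using h8
    -- every prime factor of hpol divides g1
    obtain ⟨w0, hw0⟩ := hfd
    have hg1_fact : g1 = f ^ (p - 1) * w0 ^ p := by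
      apply mul_left_cancel₀ hf.ne_zero
      have hps : p - 1 + 1 = p := Nat.succ_pred_eq_of_pos hp.pos
      rw [hfg1, ← hup, hw0, mul_pow, ← mul_assoc, ← pow_succ', hps]
    have hkey : ∀ π : Polynomial F, Prime π → π ∣ hpol → π ∣ g1 := by
      intro π hπ hπh
      have hπu : π ∣ u := hπ.dvd_of_dvd_pow (show π ∣ u ^ (p ^ 2 - p) from hpolu ▸ hπh)
      rcases hπ.dvd_mul.mp (hw0 ▸ hπu) with h | h
      · exact hg1_fact ▸ (h.trans (dvd_pow_self f (Nat.sub_ne_zero_of_lt hp.one_lt))).mul_right _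
      · exact hg1_fact ▸ (h.trans (dvd_pow_self w0 hp.pos.ne')).mul_left _
    have hvu : IsUnit v := by
      by_contra hnv
      have hv_ne : v ≠ 0 := by
        rintro rfl
        rw [mul_zero] at hv
        exact hpol_ne hv
      obtain ⟨π, hπirr, hπv⟩ := WfDvdMonoid.exists_irreducible_factor hnv hv_ne
      have hπp : Prime π := hπirr.prime
      have hπg1 : π ∣ g1 := hkey π hπp (hπv.trans ⟨d, by rw [hv]; ring⟩)
      have h9 : d * π ∣ c := by
        rw [hw, ht]
        exact mul_dvd_mul_left d (hπg1.mul_right t)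
      have h10 : d * π ∣ hpol := by
        rw [hv]
        exact mul_dvd_mul_left d hπv
      have h11 : d * π ∣ d := EuclideanDomain.dvd_gcd h9 h10
      have : π ∣ 1 := (mul_dvd_mul_iff_left hd_ne).mp (by simpa using h11)
      exact hπirr.not_isUnit (isUnit_of_dvd_one this)
    have hassoc : Associated c m := by
      have a1 : Associated (g1 * d) c := ⟨htu.unit, by rw [htu.unit_spec, hw, ht]; ring⟩
      have a2 : Associated (g1 * d) m := ⟨hvu.unit, by rw [hvu.unit_spec, hm_eq, hv]; ring⟩
      exact a1.symm.trans a2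
    have hceq : c = m := eq_of_monic_of_associated hc_monic hm_monic hassoc
    exact ⟨hm_monic, fun g => hceq ▸ hc g⟩
end

section
/- Let q ≥ 3 be an odd prime power and t ≥ 2 an integer. Then W(q^{2^t} − 1) < 2 · q^{2^t/(t−1)}. -/
open Polynomial

section stmt6aux
open Finset

-- factorial bounds
lemma aux_fac1 : ∀ k : ℕ, 8 ^ k ≤ 512 * k.factorial := by
  intro k
  induction k with
  | zero => norm_num
  | succ n ih =>
    rcases Nat.lt_or_ge n 7 with h | h
    · interval_cases n <;> simp [Nat.factorial]
    · calc 8 ^ (n+1) = 8 * 8 ^ n := by ring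
        _ ≤ 8 * (512 * n.factorial) := by omega
        _ ≤ 512 * ((n+1) * n.factorial) := by nlinarith [Nat.factorial_pos n]
        _ = 512 * (n+1).factorial := by rw [Nat.factorial_succ]

-- product of distinct positive naturals ≥ card!
lemma aux_prod_distinct : ∀ (n : ℕ) (T : Finset ℕ), T.card = n → 0 ∉ T →
    n.factorial ≤ ∏ x ∈ T, x := by
  intro n
  induction n with
  | zero =>
    intro T h _
    have : T = ∅ := Finset.card_eq_zero.1 h
    simp [this, Nat.factorial]
  | succ n ih =>
    intro T hcard h0
    have hne : T.Nonempty := by rw [← Finset.card_pos, hcard]; omega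
    set m := T.max' hne with hm
    have hmem : m ∈ T := T.max'_mem hne
    have hsub : T ⊆ Finset.Icc 1 m := by
      intro x hx
      rw [Finset.mem_Icc]
      exact ⟨Nat.one_le_iff_ne_zero.2 (fun h => h0 (h ▸ hx)), T.le_max' x hx⟩
    have hcm : n + 1 ≤ m := by
      have := Finset.card_le_card hsub
      simpa [hcard, Nat.card_Icc] using this
    have her : (T.erase m).card = n := by rw [Finset.card_erase_of_mem hmem, hcard]; rfl
    have hih := ih (T.erase m) her (fun h => h0 (Finset.mem_of_mem_erase h))
    calc (n+1).factorial = (n+1) * n.factorial := Nat.factorial_succ n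
      _ ≤ m * ∏ x ∈ T.erase m, x := Nat.mul_le_mul hcm hih
      _ = ∏ x ∈ T, x := by rw [mul_comm, Finset.prod_erase_mul _ _ hmem]


-- product of distinct naturals ≡ 1 mod M
lemma aux_prod_mod (S : Finset ℕ) (M : ℕ) (hM : 1 ≤ M)
    (hS : ∀ p ∈ S, M ∣ p - 1 ∧ M + 1 ≤ p) :
    M ^ S.card * S.card.factorial ≤ ∏ p ∈ S, p := by
  set f : ℕ → ℕ := fun p => (p - 1) / M with hf
  have hfp : ∀ p ∈ S, p - 1 = M * f p := fun p hp => (Nat.mul_div_cancel' (hS p hp).1).symm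
  have hf1 : ∀ p ∈ S, 1 ≤ f p := by
    intro p hp
    have h1 := hfp p hp
    have h2 := (hS p hp).2
    rcases Nat.eq_zero_or_pos (f p) with h | h
    · rw [h, mul_zero] at h1; omega
    · exact h
  have hinj : Set.InjOn f S := by
    intro a ha b hb hab
    have h1 := hfp a ha; have h2 := hfp b hb
    have := (hS a ha).2; have := (hS b hb).2
    have : a - 1 = b - 1 := by rw [h1, h2, hab]
    omega
  have step1 : ∏ p ∈ S, (M * f p) ≤ ∏ p ∈ S, p := by
    apply Finset.prod_le_prod'
    intro p hp
    have := hfp p hp; have := (hS p hp).2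
    omega
  have step2 : ∏ p ∈ S, (M * f p) = M ^ S.card * ∏ p ∈ S, f p := by
    rw [Finset.prod_mul_distrib, Finset.prod_const]
  have step3 : S.card.factorial ≤ ∏ p ∈ S, f p := by
    have himg : ∏ x ∈ S.image f, x = ∏ p ∈ S, f p :=
      Finset.prod_image (fun a ha b hb h => hinj ha hb h)
    rw [← himg]
    apply aux_prod_distinct _ (S.image f)
    · rw [Finset.card_image_of_injOn hinj]
    · intro h0
      obtain ⟨p, hp, hp0⟩ := Finset.mem_image.1 h0
      have := hf1 p hp; omega
  calc M ^ S.card * S.card.factorial ≤ M ^ S.card * ∏ p ∈ S, f p :=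
        Nat.mul_le_mul_left _ step3
    _ = ∏ p ∈ S, (M * f p) := step2.symm
    _ ≤ ∏ p ∈ S, p := step1

-- key: N even-ish, all odd prime factors ≡ 1 mod M
lemma aux_key (N M s : ℕ) (hN : 0 < N) (hM : 1 ≤ M) (hc : 2 ^ s ∣ N)
    (hmod : ∀ p ∈ N.primeFactors.erase 2, M ∣ p - 1) :
    2 ^ s * (M ^ (N.primeFactors.erase 2).card * (N.primeFactors.erase 2).card.factorial) ≤ N := by
  set S := N.primeFactors.erase 2 with hSdef
  have hprime : ∀ p ∈ S, p.Prime ∧ p ≠ 2 := by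
    intro p hp
    rw [hSdef, Finset.mem_erase] at hp
    exact ⟨(Nat.mem_primeFactors.1 hp.2).1, hp.1⟩
  have hS : ∀ p ∈ S, M ∣ p - 1 ∧ M + 1 ≤ p := by
    intro p hp
    refine ⟨hmod p hp, ?_⟩
    have hpp := hprime p hp
    have h3 : 3 ≤ p := by
      have := hpp.1.two_le
      omega
    have := Nat.le_of_dvd (by omega) (hmod p hp)
    omega
  have hprod := aux_prod_mod S M hM hS
  have hdvd : ∏ p ∈ S, p ∣ N := by
    refine dvd_trans ?_ (Nat.prod_primeFactors_dvd N)
    exact Finset.prod_dvd_prod_of_subset _ _ _ (Finset.erase_subset _ _)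
  have hcop : Nat.Coprime (2 ^ s) (∏ p ∈ S, p) := by
    apply Nat.Coprime.prod_right
    intro p hp
    have hpp := hprime p hp
    exact (Nat.coprime_primes Nat.prime_two hpp.1).2 (Ne.symm hpp.2) |>.pow_left _
  have hmd : 2 ^ s * ∏ p ∈ S, p ∣ N := hcop.mul_dvd_of_dvd_of_dvd hc hdvd
  calc 2 ^ s * (M ^ S.card * S.card.factorial) ≤ 2 ^ s * ∏ p ∈ S, p :=
        Nat.mul_le_mul_left _ hprod
    _ ≤ N := Nat.le_of_dvd hN hmd


-- odd prime dividing q^(2^j)+1 is ≡ 1 mod 2^(j+1)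
lemma aux_order (q p j : ℕ) (hp : p.Prime) (hp2 : p ≠ 2) (hj : 1 ≤ j)
    (hdvd : p ∣ q ^ 2 ^ j + 1) : 2 ^ (j + 1) ∣ p - 1 := by
  haveI := Fact.mk hp
  have hq : ((q : ZMod p)) ^ 2 ^ j = -1 := by
    have h0 : ((q ^ 2 ^ j + 1 : ℕ) : ZMod p) = 0 :=
      (ZMod.natCast_eq_zero_iff _ _).2 hdvd
    push_cast at h0
    linear_combination h0
  have hne : (-1 : ZMod p) ≠ 1 := by
    intro h
    have h2 : ((2 : ℕ) : ZMod p) = 0 := by push_cast; linear_combination -h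
    have := (ZMod.natCast_eq_zero_iff 2 p).1 h2
    exact hp2 ((Nat.prime_dvd_prime_iff_eq hp Nat.prime_two).1 this)
  set x : ZMod p := (q : ZMod p) with hx
  have hx1 : x ^ 2 ^ (j + 1) = 1 := by
    rw [pow_succ, pow_mul, hq]
    ring
  have hord : orderOf x ∣ 2 ^ (j + 1) := orderOf_dvd_of_pow_eq_one hx1
  obtain ⟨i, hi, hoi⟩ := (Nat.dvd_prime_pow Nat.prime_two).1 hord
  have hij : i = j + 1 := by
    by_contra hne'
    have hij' : i ≤ j := by omega
    have hdvd2 : orderOf x ∣ 2 ^ j := hoi ▸ pow_dvd_pow 2 hij'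
    have : x ^ 2 ^ j = 1 := orderOf_dvd_iff_pow_eq_one.1 hdvd2
    rw [hq] at this
    exact hne this
  have hx0 : x ≠ 0 := by
    intro h
    rw [h, zero_pow (by positivity)] at hq
    exact hne (by linear_combination (-2 : ZMod p) * hq)
  have hfin := ZMod.orderOf_dvd_card_sub_one hx0
  rwa [hoi, hij] at hfin

lemma aux_eight_dvd (q : ℕ) (hodd : Odd q) : 8 ∣ q ^ 2 - 1 := by
  obtain ⟨a, ha⟩ := hodd
  subst ha
  have h2 : 2 ∣ a * (a + 1) := (Nat.even_mul_succ_self a).two_dvd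
  obtain ⟨b, hb⟩ := h2
  have : (2 * a + 1) ^ 2 - 1 = 8 * b := by
    have : (2 * a + 1) ^ 2 = 4 * (a * (a + 1)) + 1 := by ring
    rw [this, hb]
    omega
  exact ⟨b, this⟩

lemma aux_factor (q : ℕ) (hq : 1 ≤ q) : ∀ t : ℕ, 1 ≤ t →
    q ^ 2 ^ t - 1 = (q ^ 2 - 1) * ∏ j ∈ Finset.Ico 1 t, (q ^ 2 ^ j + 1) := by
  intro t ht
  induction t, ht using Nat.le_induction with
  | base => simp
  | succ t ht ih =>
    have ha : 1 ≤ q ^ 2 ^ t := Nat.one_le_pow _ _ hq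
    have hsq : q ^ 2 ^ (t + 1) = (q ^ 2 ^ t) * (q ^ 2 ^ t) := by
      rw [← pow_add]
      congr 1
      omega
    have hfac : q ^ 2 ^ (t + 1) - 1 = (q ^ 2 ^ t - 1) * (q ^ 2 ^ t + 1) := by
      rw [hsq]
      set a := q ^ 2 ^ t
      have haa : 1 ≤ a * a := Nat.one_le_iff_ne_zero.2 (Nat.mul_ne_zero (by omega) (by omega))
      zify [ha, haa]
      ring
    rw [hfac, ih, Finset.prod_Ico_succ_top ht, mul_assoc]


lemma aux_W_le (m : ℕ) (hm : m ≠ 0) : Wnat m ≤ 2 ^ m.primeFactors.card := by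
  classical
  rw [Wnat, ← Finset.card_powerset]
  apply Finset.card_le_card_of_injOn (fun d => d.primeFactors)
  · intro d hd
    simp only [Finset.mem_coe, Finset.mem_filter, Nat.mem_divisors] at hd
    exact Finset.mem_powerset.2 (Nat.primeFactors_mono hd.1.1 hm)
  · intro a ha b hb hab
    simp only [Finset.mem_coe, Finset.mem_filter, Nat.mem_divisors] at ha hb
    have h1 := Nat.prod_primeFactors_of_squarefree ha.2
    have h2 := Nat.prod_primeFactors_of_squarefree hb.2
    simp only at hab
    rw [← h1, ← h2, hab]


lemma aux_nat_ineq : ∀ t : ℕ, 5 ≤ t → 9 * (t : ℝ) * ((t : ℝ) - 1) ≤ (3 / 2) * 2 ^ t * (3 * (t : ℝ) - 8) := by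
  intro t ht
  induction t, ht using Nat.le_induction with
  | base => norm_num
  | succ t ht ih =>
    have h32 : (32 : ℝ) ≤ 2 ^ t := by
      calc (32 : ℝ) = 2 ^ 5 := by norm_num
        _ ≤ 2 ^ t := pow_le_pow_right₀ (by norm_num) ht
    have hT : (5 : ℝ) ≤ (t : ℝ) := by exact_mod_cast ht
    push_cast
    rw [pow_succ]
    nlinarith [ih, h32, hT]

lemma aux_sumB (L : ℝ) (hL : 3 / 2 ≤ L) : ∀ t : ℕ, 2 ≤ t →
    (2 * L - 3) + L + ∑ j ∈ Finset.Ico 2 t, ((2 : ℝ) ^ j * L + 9) / ((j : ℝ) + 4)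
      < 2 ^ t * L / ((t : ℝ) - 1) := by
  have main5 : ∀ t : ℕ, 5 ≤ t →
      (2 * L - 3) + L + ∑ j ∈ Finset.Ico 2 t, ((2 : ℝ) ^ j * L + 9) / ((j : ℝ) + 4)
        < 2 ^ t * L / ((t : ℝ) - 1) := by
    intro t ht
    induction t, ht using Nat.le_induction with
    | base =>
      rw [show Finset.Ico 2 5 = {2, 3, 4} from rfl]
      rw [Finset.sum_insert (by decide), Finset.sum_insert (by decide), Finset.sum_singleton]
      norm_num
      linarith
    | succ t ht ih =>
      rw [Finset.sum_Ico_succ_top (by omega : 2 ≤ t)]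
      have hT : (5 : ℝ) ≤ (t : ℝ) := by exact_mod_cast ht
      have hX : (0 : ℝ) < 2 ^ t := by positivity
      have haux := aux_nat_ineq t ht
      have hprodpos : (0 : ℝ) ≤ (L - 3 / 2) * (2 ^ t * (3 * (t : ℝ) - 8)) :=
        mul_nonneg (by linarith) (mul_nonneg hX.le (by linarith))
      have hkey : ((2 : ℝ) ^ t * L + 9) / ((t : ℝ) + 4)
          ≤ 2 ^ t * L * ((t : ℝ) - 2) / ((t : ℝ) * ((t : ℝ) - 1)) := by
        rw [div_le_div_iff₀ (by linarith) (by nlinarith)]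
        nlinarith [haux, hprodpos]
      have hid : 2 ^ t * L * ((t : ℝ) - 2) / ((t : ℝ) * ((t : ℝ) - 1)) + 2 ^ t * L / ((t : ℝ) - 1)
          = 2 ^ (t + 1) * L / (t : ℝ) := by
        have h1 : (t : ℝ) ≠ 0 := by linarith
        have h2 : (t : ℝ) - 1 ≠ 0 := by linarith
        rw [pow_succ]
        field_simp
        ring
      have hcast : ((t + 1 : ℕ) : ℝ) - 1 = (t : ℝ) := by push_cast; ring
      rw [hcast]
      linarith [ih, hkey, hid]
  intro t ht
  rcases Nat.lt_or_ge t 5 with h | h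
  · interval_cases t
    · simp; linarith
    · rw [show Finset.Ico 2 3 = {2} from rfl, Finset.sum_singleton]
      norm_num; linarith
    · rw [show Finset.Ico 2 4 = {2, 3} from rfl, Finset.sum_insert (by decide),
        Finset.sum_singleton]
      norm_num; linarith
  · exact main5 t h

end stmt6aux

/-- For an odd prime power `q ≥ 3` and `t ≥ 2`,
`W(q^{2^t} - 1) < 2·q^{2^t/(t-1)}`. -/
theorem stmt6 (q p e t : ℕ) (hp : p.Prime) (hqe : q = p ^ e) (hodd : Odd q)
    (hq3 : 3 ≤ q) (ht : 2 ≤ t) :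
    (Wnat (q ^ 2 ^ t - 1) : ℝ) < 2 * (q : ℝ) ^ ((2 ^ t : ℝ) / ((t : ℝ) - 1)) := by
  clear hp hqe
  set L : ℝ := Real.logb 2 q with hLdef
  set m : ℕ := q ^ 2 ^ t - 1 with hmdef
  set N : ℕ → ℕ := fun j => if j = 0 then q ^ 2 - 1 else q ^ 2 ^ j + 1 with hNdef
  set k : ℕ → ℕ := fun j => ((N j).primeFactors.erase 2).card with hkdef
  have hq1 : 1 ≤ q := by omega
  have hq9 : 9 ≤ q ^ 2 := by nlinarith
  have hq8 : 8 ≤ q ^ 2 - 1 := by omega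
  have hqt3 : 3 ≤ q ^ 2 ^ t := le_trans hq3 (Nat.le_self_pow (by positivity) q)
  have hm0 : m ≠ 0 := by omega
  have hN0 : ∀ j, N j ≠ 0 := by
    intro j
    by_cases hj : j = 0 <;> simp [hNdef, hj] <;> omega
  -- prime factor subset
  have hsub : m.primeFactors ⊆
      insert 2 ((Finset.range t).biUnion fun j => (N j).primeFactors.erase 2) := by
    intro pp hpp
    obtain ⟨hppp, hppdvd, -⟩ := Nat.mem_primeFactors.1 hpp
    by_cases hp2 : pp = 2
    · exact Finset.mem_insert.2 (Or.inl hp2)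
    · refine Finset.mem_insert.2 (Or.inr ?_)
      rw [hmdef, aux_factor q hq1 t (by omega)] at hppdvd
      rcases (Nat.Prime.dvd_mul hppp).1 hppdvd with h | h
      · refine Finset.mem_biUnion.2 ⟨0, Finset.mem_range.2 (by omega), ?_⟩
        refine Finset.mem_erase.2 ⟨hp2, Nat.mem_primeFactors.2 ⟨hppp, ?_, hN0 0⟩⟩
        simpa [hNdef] using h
      · obtain ⟨j, hj, hjd⟩ := hppp.prime.exists_mem_finset_dvd h
        rw [Finset.mem_Ico] at hj
        refine Finset.mem_biUnion.2 ⟨j, Finset.mem_range.2 hj.2, ?_⟩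
        refine Finset.mem_erase.2 ⟨hp2, Nat.mem_primeFactors.2 ⟨hppp, ?_, hN0 j⟩⟩
        simpa [hNdef, if_neg (show j ≠ 0 by omega)] using hjd
  have homega : m.primeFactors.card ≤ 1 + ∑ j ∈ Finset.range t, k j := by
    calc m.primeFactors.card
        ≤ (insert 2 ((Finset.range t).biUnion fun j => (N j).primeFactors.erase 2)).card :=
          Finset.card_le_card hsub
      _ ≤ 1 + ((Finset.range t).biUnion fun j => (N j).primeFactors.erase 2).card := by
          have := Finset.card_insert_le 2 ((Finset.range t).biUnion fun j => (N j).primeFactors.erase 2)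
          omega
      _ ≤ 1 + ∑ j ∈ Finset.range t, k j := by
          rw [hkdef]
          exact Nat.add_le_add_left (Finset.card_biUnion_le) 1
  -- nat bounds
  have hoddpf : ∀ (n : ℕ) (pp : ℕ), pp ∈ n.primeFactors.erase 2 → pp.Prime ∧ pp ≠ 2 := by
    intro n pp hpp
    rw [Finset.mem_erase] at hpp
    exact ⟨(Nat.mem_primeFactors.1 hpp.2).1, hpp.1⟩
  have hk0 : 2 ^ (k 0 + 3) ≤ q ^ 2 := by
    have hkey := aux_key (q ^ 2 - 1) 2 3 (by omega) (by norm_num)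
      (by simpa using aux_eight_dvd q hodd)
      (by
        intro pp hpp
        obtain ⟨h1, h2⟩ := hoddpf _ pp hpp
        obtain ⟨c, hc⟩ := h1.odd_of_ne_two h2
        omega)
    have hN0eq : N 0 = q ^ 2 - 1 := by simp [hNdef]
    have hfacpos := Nat.factorial_pos (k 0)
    have hle : 2 ^ 3 * 2 ^ (k 0) ≤ q ^ 2 - 1 := by
      calc 2 ^ 3 * 2 ^ (k 0) ≤ 2 ^ 3 * (2 ^ (k 0) * (k 0).factorial) := by
            have : 1 ≤ (k 0).factorial := hfacpos
            have h2 : 0 < 2 ^ (k 0) := by positivity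
            nlinarith
        _ ≤ q ^ 2 - 1 := by rw [hkdef]; simpa [hN0eq] using hkey
    calc 2 ^ (k 0 + 3) = 2 ^ 3 * 2 ^ (k 0) := by ring
      _ ≤ q ^ 2 - 1 := hle
      _ ≤ q ^ 2 := by omega
  have hevenN : ∀ j, 1 ≤ j → 2 ∣ q ^ 2 ^ j + 1 := by
    intro j hj
    obtain ⟨c, hc⟩ := hodd.pow (n := 2 ^ j)
    omega
  have hdvdpf : ∀ (n : ℕ) (pp : ℕ), n ≠ 0 → pp ∈ n.primeFactors.erase 2 → pp ∣ n := by
    intro n pp _ hpp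
    exact (Nat.mem_primeFactors.1 (Finset.mem_erase.1 hpp).2).2.1
  have hk1 : 2 ^ (2 * k 1) ≤ q ^ 2 := by
    have hkey := aux_key (q ^ 2 + 1) 4 1 (by omega) (by norm_num)
      (by simpa using hevenN 1 le_rfl)
      (by
        intro pp hpp
        obtain ⟨h1, h2⟩ := hoddpf _ pp hpp
        have hd : pp ∣ q ^ 2 ^ 1 + 1 := by
          simpa using hdvdpf _ pp (by omega) hpp
        simpa using aux_order q pp 1 h1 h2 le_rfl hd)
    have hN1eq : N 1 = q ^ 2 + 1 := by simp [hNdef]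
    have hle : 2 * 4 ^ (k 1) ≤ q ^ 2 + 1 := by
      calc 2 * 4 ^ (k 1) ≤ 2 * (4 ^ (k 1) * (k 1).factorial) := by
            have h1 : 1 ≤ (k 1).factorial := Nat.factorial_pos _
            have h2 : 0 < 4 ^ (k 1) := by positivity
            nlinarith
        _ ≤ q ^ 2 + 1 := by rw [hkdef]; simpa [hN1eq] using hkey
    have h4 : 4 ^ (k 1) ≤ q ^ 2 := by omega
    calc 2 ^ (2 * k 1) = 4 ^ (k 1) := by rw [pow_mul]; norm_num
      _ ≤ q ^ 2 := h4
  have hkj : ∀ j, 2 ≤ j → 2 ^ ((j + 4) * k j) ≤ 512 * q ^ 2 ^ j := by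
    intro j hj
    have hNjeq : N j = q ^ 2 ^ j + 1 := by simp [hNdef, if_neg (show j ≠ 0 by omega)]
    have hkey := aux_key (q ^ 2 ^ j + 1) (2 ^ (j + 1)) 1 (by omega) (Nat.one_le_two_pow)
      (by simpa using hevenN j (by omega))
      (by
        intro pp hpp
        obtain ⟨h1, h2⟩ := hoddpf _ pp hpp
        exact aux_order q pp j h1 h2 (by omega) (hdvdpf _ pp (by omega) hpp))
    set K := k j with hKdef
    have hkeq : ((q ^ 2 ^ j + 1).primeFactors.erase 2).card = K := by
      rw [hKdef, hkdef]
      simp only [hNjeq]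
    rw [hkeq] at hkey
    have hle : (2 ^ (j + 1)) ^ K * K.factorial ≤ q ^ 2 ^ j := by
      have hq2 : q ^ 2 ^ j + 1 ≤ 2 * q ^ 2 ^ j := by
        have : 1 ≤ q ^ 2 ^ j := Nat.one_le_pow _ _ (by omega)
        omega
      have h2 : 2 * ((2 ^ (j + 1)) ^ K * K.factorial) ≤ 2 * q ^ 2 ^ j := by
        calc 2 * ((2 ^ (j + 1)) ^ K * K.factorial) = 2 ^ 1 * ((2 ^ (j + 1)) ^ K * K.factorial) := by
              ring
          _ ≤ q ^ 2 ^ j + 1 := hkey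
          _ ≤ 2 * q ^ 2 ^ j := hq2
      omega
    calc 2 ^ ((j + 4) * K) = (2 ^ (j + 1)) ^ K * 8 ^ K := by
          rw [← pow_mul, show (8 : ℕ) = 2 ^ 3 from rfl, ← pow_mul, ← pow_add]
          congr 1
          ring
      _ ≤ (2 ^ (j + 1)) ^ K * (512 * K.factorial) := Nat.mul_le_mul_left _ (aux_fac1 K)
      _ = 512 * ((2 ^ (j + 1)) ^ K * K.factorial) := by ring
      _ ≤ 512 * q ^ 2 ^ j := Nat.mul_le_mul_left _ hle
  -- real conversions
  have hq0R : (0 : ℝ) < (q : ℝ) := by positivity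
  have hlog : ∀ a b : ℕ, 0 < b → 2 ^ a ≤ b → (a : ℝ) ≤ Real.logb 2 b := by
    intro a b hb h
    rw [Real.le_logb_iff_rpow_le (by norm_num) (by exact_mod_cast hb)]
    rw [Real.rpow_natCast]
    exact_mod_cast h
  have hL32 : 3 / 2 ≤ L := by
    rw [hLdef, Real.le_logb_iff_rpow_le (by norm_num) hq0R]
    have h1 : ((2 : ℝ) ^ ((3 : ℝ) / 2)) ^ 2 = 8 := by
      rw [← Real.rpow_natCast ((2 : ℝ) ^ ((3 : ℝ) / 2)) 2, ← Real.rpow_mul (by norm_num)]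
      norm_num
    have h2 : (0 : ℝ) < (2 : ℝ) ^ ((3 : ℝ) / 2) := Real.rpow_pos_of_pos (by norm_num) _
    have h3 : (3 : ℝ) ≤ (q : ℝ) := by exact_mod_cast hq3
    nlinarith
  have hlogq : Real.logb 2 (((q ^ 2 : ℕ) : ℝ)) = 2 * L := by
    push_cast
    rw [Real.logb_pow]
    norm_num [hLdef]
  have hr0 : (k 0 : ℝ) ≤ 2 * L - 3 := by
    have h := hlog (k 0 + 3) (q ^ 2) (by positivity) hk0
    rw [hlogq] at h
    push_cast at h
    linarith
  have hr1 : (k 1 : ℝ) ≤ L := by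
    have h := hlog (2 * k 1) (q ^ 2) (by positivity) hk1
    rw [hlogq] at h
    push_cast at h
    linarith
  have hrj : ∀ j ∈ Finset.Ico 2 t, (k j : ℝ) ≤ ((2 : ℝ) ^ j * L + 9) / ((j : ℝ) + 4) := by
    intro j hj
    rw [Finset.mem_Ico] at hj
    have h := hlog ((j + 4) * k j) (512 * q ^ 2 ^ j) (by positivity) (hkj j hj.1)
    have heq : Real.logb 2 (((512 * q ^ 2 ^ j : ℕ) : ℝ)) = 9 + (2 : ℝ) ^ j * L := by
      push_cast
      rw [Real.logb_mul (by norm_num) (by positivity), Real.logb_pow]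
      have h512 : Real.logb 2 (512 : ℝ) = 9 := by
        rw [show (512 : ℝ) = 2 ^ (9 : ℕ) by norm_num, Real.logb_pow]
        simp [Real.logb_self_eq_one]
      rw [h512, hLdef]
      push_cast
      ring
    rw [heq] at h
    push_cast at h
    rw [le_div_iff₀ (by positivity : (0 : ℝ) < (j : ℝ) + 4)]
    linarith
  have hsum : ∑ j ∈ Finset.range t, (k j : ℝ) < 2 ^ t * L / ((t : ℝ) - 1) := by
    have hsplit : ∑ j ∈ Finset.range t, (k j : ℝ)
        = ((k 0 : ℝ) + (k 1 : ℝ)) + ∑ j ∈ Finset.Ico 2 t, (k j : ℝ) := by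
      rw [Finset.range_eq_Ico, ← Finset.sum_Ico_consecutive _ (by omega : 0 ≤ 2) ht]
      congr 1
      rw [show Finset.Ico 0 2 = {0, 1} from rfl]
      rw [Finset.sum_insert (by decide), Finset.sum_singleton]
    rw [hsplit]
    have hIco := Finset.sum_le_sum hrj
    have := aux_sumB L hL32 t ht
    linarith
  -- final assembly
  have hWn : Wnat m ≤ 2 ^ (1 + ∑ j ∈ Finset.range t, k j) :=
    le_trans (aux_W_le m hm0) (Nat.pow_le_pow_right (by norm_num) homega)
  set K := ∑ j ∈ Finset.range t, k j with hKdef2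
  have hKc : ((K : ℕ) : ℝ) = ∑ j ∈ Finset.range t, (k j : ℝ) := by
    rw [hKdef2]
    push_cast
    rfl
  have hcast : (Wnat m : ℝ) ≤ 2 * (2 : ℝ) ^ ((K : ℕ) : ℝ) := by
    have h1 : (Wnat m : ℝ) ≤ ((2 ^ (1 + K) : ℕ) : ℝ) := by exact_mod_cast hWn
    rw [Real.rpow_natCast]
    calc (Wnat m : ℝ) ≤ ((2 ^ (1 + K) : ℕ) : ℝ) := h1
      _ = 2 * (2 : ℝ) ^ K := by push_cast [pow_succ, pow_add]; ring
  have hexp : ((K : ℕ) : ℝ) < L * ((2 : ℝ) ^ t / ((t : ℝ) - 1)) := by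
    rw [hKc]
    calc ∑ j ∈ Finset.range t, (k j : ℝ) < 2 ^ t * L / ((t : ℝ) - 1) := hsum
      _ = L * ((2 : ℝ) ^ t / ((t : ℝ) - 1)) := by ring
  have hfin : (2 : ℝ) ^ ((K : ℕ) : ℝ) < (q : ℝ) ^ ((2 : ℝ) ^ t / ((t : ℝ) - 1)) := by
    have h1 : (2 : ℝ) ^ ((K : ℕ) : ℝ) < (2 : ℝ) ^ (L * ((2 : ℝ) ^ t / ((t : ℝ) - 1))) :=
      (Real.rpow_lt_rpow_left_iff (by norm_num)).2 hexp
    rw [Real.rpow_mul (by norm_num : (0 : ℝ) ≤ 2), hLdef,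
      Real.rpow_logb (by norm_num) (by norm_num) hq0R] at h1
    exact h1
  calc (Wnat m : ℝ) ≤ 2 * (2 : ℝ) ^ ((K : ℕ) : ℝ) := hcast
    _ < 2 * (q : ℝ) ^ ((2 : ℝ) ^ t / ((t : ℝ) - 1)) := by linarith
end

section
/- Let q be a power of the prime p and let n be a positive integer such that every prime divisor of n divides p(q − 1). Then n is F_q-practical, i.e., for every 1 ≤ k ≤ n − 1 the polynomial x^n − 1 has a divisor of degree k in F_q[x]. -/
open Polynomial

lemma all_degrees_divisor {F : Type*} [Field F] :
    ∀ m : ℕ, 0 < m →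
      (∀ r : ℕ, r.Prime → r ∣ m → ∃ ζ : F, IsPrimitiveRoot ζ r) →
      ∀ k ≤ m, ∃ g : Polynomial F, g.Monic ∧ g.natDegree = k ∧ g ∣ X ^ m - 1 := by
  intro m
  induction m using Nat.strong_induction_on with
  | _ m ih =>
    intro hm hroot k hk
    rcases Nat.eq_zero_or_pos k with rfl | hk0
    · exact ⟨1, monic_one, natDegree_one, one_dvd _⟩
    rcases eq_or_lt_of_le hk with rfl | hkm
    · exact ⟨X ^ k - 1, monic_X_pow_sub_C 1 (by omega),
        by rw [← C_1]; exact natDegree_X_pow_sub_C, dvd_rfl⟩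
    have hm2 : 2 ≤ m := by omega
    set r := m.minFac with hrdef
    have hrp : r.Prime := Nat.minFac_prime (by omega)
    obtain ⟨m', hm'⟩ := m.minFac_dvd
    have hm'pos : 0 < m' := by
      rcases Nat.eq_zero_or_pos m' with rfl | h
      · omega
      · exact h
    have hr2 : 2 ≤ r := hrp.two_le
    have hm'lt : m' < m := by nlinarith
    obtain ⟨ζ, hζ⟩ := hroot r hrp m.minFac_dvd
    obtain ⟨g, hgm, hgd, hgdvd⟩ := ih m' hm'lt hm'pos
      (fun s hs hdvd => hroot s hs (hdvd.trans ⟨r, by rw [hm']; ring⟩))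
      (k % m') (le_of_lt (Nat.mod_lt _ hm'pos))
    set a := k / m' with hadef
    have hdm : m' * a + k % m' = k := Nat.div_add_mod k m'
    have ha : a < r := by
      rw [hadef]
      exact Nat.div_lt_of_lt_mul (by nlinarith [hm'])
    have hmon : ∀ c : F, (X ^ m' - C c).Monic := fun c => monic_X_pow_sub_C c (by omega)
    refine ⟨(∏ i ∈ Finset.range a, (X ^ m' - C (ζ ^ (i + 1)))) * g, ?_, ?_, ?_⟩
    · exact (monic_prod_of_monic _ _ fun i _ => hmon _).mul hgm
    · rw [Monic.natDegree_mul (monic_prod_of_monic _ _ fun i _ => hmon _) hgm,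
        natDegree_prod_of_monic _ _ (fun i _ => hmon _), hgd]
      simp only [natDegree_X_pow_sub_C, Finset.sum_const, Finset.card_range, smul_eq_mul]
      have : a * m' = m' * a := mul_comm _ _
      omega
    · have key : (X : Polynomial F) ^ m - 1 = ∏ i ∈ Finset.range r, (X ^ m' - C (ζ ^ i)) := by
        have h1 : (X ^ r - C (1 : F)) = ∏ i ∈ Finset.range r, (X - C (ζ ^ i * 1)) :=
          X_pow_sub_C_eq_prod hζ hrp.pos (one_pow r)
        have h2 := congrArg (fun P : Polynomial F => P.comp (X ^ m')) h1
        simp only [sub_comp, pow_comp, X_comp, C_comp, prod_comp, one_comp, mul_one, map_one] at h2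
        rw [hm', mul_comm r m', pow_mul]
        exact h2
      rw [key]
      have step : (∏ i ∈ Finset.range a, ((X : Polynomial F) ^ m' - C (ζ ^ (i + 1)))) * g ∣
          ∏ i ∈ Finset.range (a + 1), (X ^ m' - C (ζ ^ i)) := by
        rw [Finset.prod_range_succ']
        simp only [pow_zero, map_one]
        exact mul_dvd_mul dvd_rfl hgdvd
      exact step.trans (Finset.prod_dvd_prod_of_subset _ _ _
        (Finset.range_subset_range.mpr ha))

/-- If every prime divisor of `n` divides `p(q-1)`, then `n` is
`F_q`-practical. -/
theorem stmt12 {F : Type*} [Field F] [Fintype F]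
    (p e q n : ℕ) (hp : p.Prime) (hqe : q = p ^ e) (hq : Fintype.card F = q)
    (hn : 0 < n) (hdvd : ∀ r : ℕ, r.Prime → r ∣ n → r ∣ p * (q - 1)) :
    FqPractical F n := by
  intro k hk1 hk2
  classical
  haveI := Fact.mk hp
  have hq2 : 2 ≤ q := hq ▸ Fintype.one_lt_card
  have he : e ≠ 0 := by rintro rfl; rw [pow_zero] at hqe; omega
  haveI hcharP : CharP F p := by
    obtain ⟨n', hp', hcard⟩ := FiniteField.card F (ringChar F)
    have hdp : p ∣ ringChar F ^ (n' : ℕ) := by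
      rw [← hcard, hq, hqe]; exact dvd_pow_self p he
    have : p = ringChar F :=
      (Nat.prime_dvd_prime_iff_eq hp hp').mp (hp.dvd_of_dvd_pow hdp)
    exact this ▸ ringChar.charP F
  set a := n.factorization p with hadef
  set m := n / p ^ a with hmdef
  have hfact : p ^ a * m = n := Nat.ordProj_mul_ordCompl_eq_self n p
  have hm : 0 < m := Nat.ordCompl_pos p hn.ne'
  have hpm : ¬ p ∣ m := Nat.not_dvd_ordCompl hp hn.ne'
  have hroots : ∀ r : ℕ, r.Prime → r ∣ m → ∃ ζ : F, IsPrimitiveRoot ζ r := by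
    intro r hrp hrm
    have hrn : r ∣ n := hrm.trans (Nat.ordCompl_dvd n p)
    have hrq : r ∣ q - 1 := by
      rcases (Nat.Prime.dvd_mul hrp).mp (hdvd r hrp hrn) with h | h
      · exact absurd (((Nat.prime_dvd_prime_iff_eq hrp hp).mp h) ▸ hrm) hpm
      · exact h
    obtain ⟨gen, hgen⟩ := IsCyclic.exists_ofOrder_eq_natCard (α := Fˣ)
    have hcardu : Nat.card Fˣ = q - 1 := by
      rw [Nat.card_eq_fintype_card, Fintype.card_units, hq]
    rw [hcardu] at hgen
    have hq1 : q - 1 ≠ 0 := by omega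
    have hord : orderOf (gen ^ ((q - 1) / r)) = r := by
      rw [orderOf_pow, hgen, Nat.gcd_eq_right (Nat.div_dvd_of_dvd hrq),
        Nat.div_div_self hrq hq1]
    have hpr := IsPrimitiveRoot.orderOf (gen ^ ((q - 1) / r))
    rw [hord] at hpr
    exact ⟨((gen ^ ((q - 1) / r) : Fˣ) : F), IsPrimitiveRoot.coe_units_iff.mpr hpr⟩
  have key : ((X : Polynomial F) ^ m - 1) ^ p ^ a = X ^ n - 1 := by
    rw [sub_pow_expChar_pow, ← pow_mul, one_pow, mul_comm m, hfact]
  have hkn : k < n := by omega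
  set s := k / m with hsdef
  set t := k % m with htdef
  have hsa : s < p ^ a := by
    rw [hsdef]
    exact Nat.div_lt_of_lt_mul (by rw [mul_comm, hfact]; exact hkn)
  obtain ⟨g, hgm, hgd, hgdvd⟩ := all_degrees_divisor m hm hroots t
    (le_of_lt (Nat.mod_lt _ hm))
  have hXm : ((X : Polynomial F) ^ m - 1).Monic := by
    rw [← C_1]; exact monic_X_pow_sub_C 1 hm.ne'
  refine ⟨((X : Polynomial F) ^ m - 1) ^ s * g, ?_, ?_⟩
  · rw [Monic.natDegree_mul (hXm.pow s) hgm, hXm.natDegree_pow, hgd]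
    have h1 : ((X : Polynomial F) ^ m - 1).natDegree = m := by
      rw [← C_1]; exact natDegree_X_pow_sub_C
    rw [h1]
    have h2 : m * s + t = k := Nat.div_add_mod k m
    have h3 : s * m = m * s := mul_comm _ _
    omega
  · rw [← key]
    calc ((X : Polynomial F) ^ m - 1) ^ s * g
        ∣ ((X : Polynomial F) ^ m - 1) ^ s * ((X : Polynomial F) ^ m - 1) :=
          mul_dvd_mul dvd_rfl hgdvd
      _ = ((X : Polynomial F) ^ m - 1) ^ (s + 1) := (pow_succ _ _).symm
      _ ∣ ((X : Polynomial F) ^ m - 1) ^ p ^ a := pow_dvd_pow _ hsa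
end

section
/- Let q be a prime power, n a positive integer, and f ∈ F_q[x] a monic divisor of x^n − 1 of degree k ≥ 1. Let η be a nontrivial multiplicative character of F_{q^n} (extended by η(0) = 0). Then |Σ_{c ∈ F_{q^n}} η(L_f(c))| ≤ (q^k − 1) · q^{n/2}. -/
open Polynomial

section AuxGauss

variable {E : Type*} [Field E] [Fintype E]

lemma aux_conj_mulChar (η : MulChar E ℂ) (a : E) :
    (starRingEnd ℂ) (η a) = η⁻¹ a := by
  by_cases ha : a = 0
  · subst ha
    rw [η.map_zero, MulChar.inv_apply', inv_zero, η.map_zero, map_zero]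
  · have h1 : η a ^ (Fintype.card E - 1) = 1 := by
      rw [← map_pow, FiniteField.pow_card_sub_one_eq_one a ha, map_one]
    have hn : Fintype.card E - 1 ≠ 0 := by
      have := Fintype.one_lt_card (α := E)
      omega
    have hnorm : ‖η a‖ = 1 := Complex.norm_eq_one_of_pow_eq_one h1 hn
    rw [MulChar.inv_apply_eq_inv', ← Complex.inv_eq_conj hnorm]

lemma aux_abs_gaussSum (η : MulChar E ℂ) (hη : η ≠ 1) (ψ : AddChar E ℂ)
    (hψ : ψ.IsPrimitive) :
    ‖gaussSum η ψ‖ = Real.sqrt (Fintype.card E) := by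
  have hchar : 0 < ringChar E := Nat.pos_of_ne_zero (CharP.ringChar_ne_zero_of_finite E)
  have hconj : (starRingEnd ℂ) (gaussSum η ψ) = gaussSum η⁻¹ ψ⁻¹ := by
    unfold gaussSum
    rw [map_sum]
    refine Finset.sum_congr rfl fun a _ => ?_
    rw [map_mul, aux_conj_mulChar, AddChar.starComp_apply hchar]
  have key : ((Complex.normSq (gaussSum η ψ) : ℂ)) = (Fintype.card E : ℂ) := by
    rw [← Complex.mul_conj, hconj, gaussSum_mul_gaussSum_eq_card hη hψ]
  have key' : Complex.normSq (gaussSum η ψ) = (Fintype.card E : ℝ) := by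
    exact_mod_cast key
  rw [Complex.norm_def, key']

end AuxGauss

/-- For a nontrivial multiplicative character `η` of `F_{q^n}` and a monic
divisor `f` of `x^n - 1` of degree `k ≥ 1`, `|Σ_c η(L_f(c))| ≤ (q^k - 1) q^{n/2}`. -/
theorem stmt17 {F E : Type*} [Field F] [Fintype F] [Field E] [Fintype E] [Algebra F E]
    (q n k : ℕ) (hq : Fintype.card F = q) (hn : 0 < n) (hdim : Module.finrank F E = n)
    (f : Polynomial F) (hf : f.Monic) (hdeg : f.natDegree = k) (hk : 1 ≤ k)
    (hfd : f ∣ (X ^ n - 1 : Polynomial F))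
    (η : MulChar E ℂ) (hη : η ≠ 1) :
    ‖∑ c : E, η (qAssoc q f c)‖ ≤
      ((q : ℝ) ^ k - 1) * (q : ℝ) ^ ((n : ℝ) / 2) := by
  classical
  -- basic cardinalities
  have hq2 : 2 ≤ q := hq ▸ Fintype.one_lt_card
  have hq0 : q ≠ 0 := by omega
  have hcardE : Fintype.card E = q ^ n := by
    rw [Module.card_eq_pow_finrank (K := F) (V := E), hq, hdim]
  have hcardE0 : (Fintype.card E : ℂ) ≠ 0 := by
    exact_mod_cast Fintype.card_ne_zero
  -- characteristic facts
  set p := ringChar F with hp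
  haveI : CharP F p := ringChar.charP F
  have hpprime : p.Prime := CharP.char_is_prime F p
  haveI : Fact p.Prime := ⟨hpprime⟩
  haveI hCharE : CharP E p := charP_of_injective_algebraMap (algebraMap F E).injective p
  obtain ⟨m, -, hqm⟩ := FiniteField.card F p
  rw [hq] at hqm
  have hpow : ∀ (i : ℕ) (x y : E), (x + y) ^ q ^ i = x ^ q ^ i + y ^ q ^ i := by
    intro i x y
    rw [hqm, ← pow_mul]
    exact add_pow_char_pow x y p ((m : ℕ) * i)
  -- `L` as an additive map
  set L : E →+ E :=
    { toFun := qAssoc q f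
      map_zero' := by
        rw [qAssoc, Polynomial.sum_def]
        refine Finset.sum_eq_zero fun i _ => ?_
        rw [zero_pow (pow_ne_zero i hq0), mul_zero]
      map_add' := by
        intro x y
        simp only [qAssoc, Polynomial.sum_def]
        rw [← Finset.sum_add_distrib]
        refine Finset.sum_congr rfl fun i _ => ?_
        rw [hpow, mul_add] } with hL
  have hLapp : ∀ c : E, L c = qAssoc q f c := fun _ => rfl
  -- the primitive additive character
  set ψ₀ : AddChar E ℂ := AddChar.FiniteField.primitiveChar_to_Complex E with hψ₀def
  have hψ₀ : ψ₀.IsPrimitive := AddChar.FiniteField.primitiveChar_to_Complex_isPrimitive E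
  -- orthogonality 1
  have orth1 : ∀ x : E, ∑ b : E, ψ₀ (b * x) = if x = 0 then (Fintype.card E : ℂ) else 0 := by
    intro x
    have h := AddChar.sum_mulShift (ψ := ψ₀) x hψ₀
    rw [h]
    split_ifs <;> simp
  -- the character family
  set χfun : E → AddChar E ℂ :=
    fun b => ψ₀.compAddMonoidHom ((AddMonoidHom.mulLeft b).comp L) with hχ
  have χapp : ∀ b c : E, χfun b c = ψ₀ (b * qAssoc q f c) := fun _ _ => rfl
  -- orthogonality 2
  have orth2 : ∀ b : E, ∑ c : E, ψ₀ (b * qAssoc q f c)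
      = if χfun b = 1 then (Fintype.card E : ℂ) else 0 := by
    intro b
    have h0 : ∑ c : E, ψ₀ (b * qAssoc q f c) = ∑ c : E, χfun b c := rfl
    rw [h0]
    split_ifs with h
    · rw [h]; simp
    · exact AddChar.sum_eq_zero_of_ne_one h
  set B : Finset E := Finset.univ.filter (fun b => χfun b = 1) with hB
  set K : Finset E := Finset.univ.filter (fun c : E => qAssoc q f c = 0) with hK
  -- Gauss-type sums
  set G : E → ℂ := fun b => ∑ y : E, η y * ψ₀ (-(b * y)) with hG
  -- the inner-sum computation
  have h1 : ∀ x : E, ∑ y : E, η y * (∑ b : E, ψ₀ (b * (x - y)))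
      = η x * (Fintype.card E : ℂ) := by
    intro x
    have step : ∀ y : E, η y * (∑ b : E, ψ₀ (b * (x - y)))
        = if y = x then η y * (Fintype.card E : ℂ) else 0 := by
      intro y
      rw [orth1]
      by_cases hy : y = x
      · simp [hy]
      · rw [if_neg, mul_zero, if_neg hy]
        intro h
        exact hy (sub_eq_zero.mp h).symm
    simp_rw [step]
    rw [Finset.sum_ite_eq' Finset.univ x]
    simp
  -- the key double-sum identity
  have key : ∑ b : E, (if χfun b = 1 then (Fintype.card E : ℂ) else 0) * G b
      = (Fintype.card E : ℂ) * ∑ c : E, η (qAssoc q f c) := by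
    calc ∑ b : E, (if χfun b = 1 then (Fintype.card E : ℂ) else 0) * G b
        = ∑ b : E, (∑ c : E, ψ₀ (b * qAssoc q f c)) * G b := by
          refine Finset.sum_congr rfl fun b _ => ?_
          rw [orth2]
      _ = ∑ b : E, ∑ c : E, ∑ y : E, ψ₀ (b * qAssoc q f c) * (η y * ψ₀ (-(b * y))) := by
          refine Finset.sum_congr rfl fun b _ => ?_
          rw [Finset.sum_mul]
          refine Finset.sum_congr rfl fun c _ => ?_
          rw [hG, Finset.mul_sum]
      _ = ∑ c : E, ∑ y : E, ∑ b : E, ψ₀ (b * qAssoc q f c) * (η y * ψ₀ (-(b * y))) := by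
          rw [Finset.sum_comm]
          refine Finset.sum_congr rfl fun c _ => ?_
          rw [Finset.sum_comm]
      _ = ∑ c : E, ∑ y : E, η y * (∑ b : E, ψ₀ (b * (qAssoc q f c - y))) := by
          refine Finset.sum_congr rfl fun c _ => Finset.sum_congr rfl fun y _ => ?_
          rw [Finset.mul_sum]
          refine Finset.sum_congr rfl fun b _ => ?_
          rw [mul_sub, sub_eq_add_neg, AddChar.map_add_eq_mul]
          ring
      _ = ∑ c : E, η (qAssoc q f c) * (Fintype.card E : ℂ) := by
          exact Finset.sum_congr rfl fun c _ => h1 (qAssoc q f c)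
      _ = (Fintype.card E : ℂ) * ∑ c : E, η (qAssoc q f c) := by
          rw [← Finset.sum_mul, mul_comm]
  -- rewrite LHS of key as a sum over B
  have key2 : ∑ b : E, (if χfun b = 1 then (Fintype.card E : ℂ) else 0) * G b
      = (Fintype.card E : ℂ) * ∑ b ∈ B, G b := by
    rw [Finset.mul_sum, hB, Finset.sum_filter]
    refine Finset.sum_congr rfl fun b _ => ?_
    split_ifs <;> simp
  have hS : ∑ c : E, η (qAssoc q f c) = ∑ b ∈ B, G b := by
    have := key2.symm.trans key
    exact (mul_left_cancel₀ hcardE0 this).symm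
  -- 0 ∈ B and G 0 = 0
  have h0B : (0 : E) ∈ B := by
    rw [hB, Finset.mem_filter]
    refine ⟨Finset.mem_univ _, ?_⟩
    ext c
    rw [χapp, zero_mul, AddChar.map_zero_eq_one, AddChar.one_apply]
  have hG0 : G 0 = 0 := by
    rw [hG]
    simp only [zero_mul, neg_zero, AddChar.map_zero_eq_one, mul_one]
    exact MulChar.sum_eq_zero_of_ne_one hη
  -- |B| = |K|
  have hBKcard : B.card = K.card := by
    have hd : ∑ b : E, ∑ c : E, ψ₀ (b * qAssoc q f c)
        = (B.card : ℂ) * (Fintype.card E : ℂ) := by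
      simp_rw [orth2]
      rw [Finset.sum_ite, Finset.sum_const, Finset.sum_const_zero, add_zero,
        nsmul_eq_mul, hB]
    have hd' : ∑ b : E, ∑ c : E, ψ₀ (b * qAssoc q f c)
        = (K.card : ℂ) * (Fintype.card E : ℂ) := by
      rw [Finset.sum_comm]
      have : ∀ c : E, ∑ b : E, ψ₀ (b * qAssoc q f c)
          = if qAssoc q f c = 0 then (Fintype.card E : ℂ) else 0 := fun c => orth1 _
      simp_rw [this]
      rw [Finset.sum_ite, Finset.sum_const, Finset.sum_const_zero, add_zero,
        nsmul_eq_mul, hK]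
    have := hd.symm.trans hd'
    have h2 := mul_right_cancel₀ hcardE0 this
    exact_mod_cast h2
  -- |K| ≤ q ^ k  via the linearized polynomial
  have hKcard : K.card ≤ q ^ k := by
    set P : Polynomial E := LPoly q E f with hP
    have hPeval : ∀ c : E, P.eval c = qAssoc q f c := by
      intro c
      rw [hP, LPoly, qAssoc, Polynomial.sum_def, Polynomial.sum_def, Polynomial.eval_finset_sum]
      refine Finset.sum_congr rfl fun i _ => ?_
      simp
    have hkmem : k ∈ f.support := by
      rw [Polynomial.mem_support_iff, ← hdeg, hf.coeff_natDegree]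
      exact one_ne_zero
    have hPcoeff : P.coeff (q ^ k) = 1 := by
      rw [hP, LPoly, Polynomial.sum_def, Polynomial.finset_sum_coeff]
      have : ∀ i ∈ f.support,
          (Polynomial.C ((algebraMap F E) (f.coeff i)) * Polynomial.X ^ q ^ i).coeff (q ^ k)
          = if i = k then algebraMap F E (f.coeff i) else 0 := by
        intro i _
        rw [Polynomial.coeff_C_mul, Polynomial.coeff_X_pow]
        by_cases hik : i = k
        · simp [hik]
        · have h2 : q ^ i ≠ q ^ k := fun h => hik (Nat.pow_right_injective hq2 h)
          simp [h2, Ne.symm h2, hik]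
      rw [Finset.sum_congr rfl this, Finset.sum_ite_eq' f.support k, if_pos hkmem,
        ← hdeg, hf.coeff_natDegree, map_one]
    have hPne : P ≠ 0 := by
      intro h
      rw [h, Polynomial.coeff_zero] at hPcoeff
      exact zero_ne_one hPcoeff
    have hPdeg : P.natDegree ≤ q ^ k := by
      rw [hP, LPoly, Polynomial.sum_def]
      refine Polynomial.natDegree_sum_le_of_forall_le _ _ fun i hi => ?_
      refine le_trans (Polynomial.natDegree_C_mul_le _ _) ?_
      rw [Polynomial.natDegree_X_pow]
      exact Nat.pow_le_pow_right (by omega) (hdeg ▸ Polynomial.le_natDegree_of_mem_supp i hi)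
    have hsub : K ⊆ P.roots.toFinset := by
      intro c hc
      rw [hK, Finset.mem_filter] at hc
      rw [Multiset.mem_toFinset, Polynomial.mem_roots hPne, Polynomial.IsRoot, hPeval]
      exact hc.2
    calc K.card ≤ P.roots.toFinset.card := Finset.card_le_card hsub
      _ ≤ Multiset.card P.roots := Multiset.toFinset_card_le _
      _ ≤ P.natDegree := Polynomial.card_roots' P
      _ ≤ q ^ k := hPdeg
  -- Gauss sum magnitudes
  have hGb : ∀ b : E, b ≠ 0 → ‖G b‖ = Real.sqrt (Fintype.card E) := by
    intro b hb
    have hGeq : G b = gaussSum η (AddChar.mulShift ψ₀ (-b)) := by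
      rw [hG, gaussSum]
      refine Finset.sum_congr rfl fun y _ => ?_
      rw [AddChar.mulShift_apply, neg_mul]
    have hprim : (AddChar.mulShift ψ₀ (-b)).IsPrimitive := by
      intro a ha
      rw [AddChar.mulShift_mulShift]
      exact hψ₀ (mul_ne_zero (neg_ne_zero.mpr hb) ha)
    rw [hGeq]
    exact aux_abs_gaussSum η hη _ hprim
  -- cardinality bounds for B
  have hB1 : 1 ≤ B.card := Finset.card_pos.mpr ⟨0, h0B⟩
  have hBle : B.card ≤ q ^ k := hBKcard ▸ hKcard
  -- final estimate
  have hsqrt0 : 0 ≤ Real.sqrt (Fintype.card E) := Real.sqrt_nonneg _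
  have hsum : ∑ c : E, η (qAssoc q f c) = ∑ b ∈ B.erase 0, G b := by
    rw [hS, ← Finset.add_sum_erase _ _ h0B, hG0, zero_add]
  have hbound : ‖∑ c : E, η (qAssoc q f c)‖
      ≤ ((B.card : ℝ) - 1) * Real.sqrt (Fintype.card E) := by
    rw [hsum]
    calc ‖∑ b ∈ B.erase 0, G b‖
        ≤ ∑ b ∈ B.erase 0, ‖G b‖ := norm_sum_le _ _
      _ = ∑ b ∈ B.erase 0, Real.sqrt (Fintype.card E) := by
          refine Finset.sum_congr rfl fun b hb => ?_
          exact hGb b (Finset.ne_of_mem_erase hb)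
      _ = ((B.erase 0).card : ℝ) * Real.sqrt (Fintype.card E) := by
          rw [Finset.sum_const, nsmul_eq_mul]
      _ = ((B.card : ℝ) - 1) * Real.sqrt (Fintype.card E) := by
          rw [Finset.card_erase_of_mem h0B, Nat.cast_sub hB1, Nat.cast_one]
  have hsqrt : Real.sqrt (Fintype.card E) = (q : ℝ) ^ ((n : ℝ) / 2) := by
    rw [hcardE]
    push_cast
    rw [← Real.rpow_natCast (q : ℝ) n, Real.sqrt_eq_rpow, ← Real.rpow_mul (by positivity),
      mul_one_div]
  refine le_trans hbound ?_
  rw [hsqrt]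
  have hql : (B.card : ℝ) - 1 ≤ (q : ℝ) ^ k - 1 := by
    have : (B.card : ℝ) ≤ (q : ℝ) ^ k := by exact_mod_cast hBle
    linarith
  exact mul_le_mul_of_nonneg_right hql (by positivity)
end

section
/- Let q be a prime power, n a positive integer, and f ∈ F_q[x] a monic divisor of x^n − 1 of degree k. Let η be a nontrivial multiplicative character of F_{q^n} (extended by η(0) = 0) and ψ a nontrivial additive character of F_{q^n}. Then |Σ_{w ∈ F_{q^n}} η(L_f(w)) · ψ(w)| ≤ q^{n/2 + k}. -/
open Polynomial

section Aux
variable {F E : Type*} [Field F] [Fintype F] [Field E] [Fintype E] [Algebra F E]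

lemma pow_q_add (q : ℕ) (hq : Fintype.card F = q) (i : ℕ) (x y : E) :
    (x + y) ^ q ^ i = x ^ q ^ i + y ^ q ^ i := by
  set p := ringChar F with hp
  haveI hF : CharP F p := ringChar.charP F
  have hprime : p.Prime := CharP.char_is_prime F p
  obtain ⟨m, -, hcard⟩ := FiniteField.card F p
  haveI : CharP E p := charP_of_injective_algebraMap (algebraMap F E).injective p
  haveI : ExpChar E p := ExpChar.prime hprime
  have hqe : q ^ i = p ^ ((m : ℕ) * i) := by rw [pow_mul, ← hcard, hq]
  rw [hqe, add_pow_expChar_pow]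

lemma qAssoc_add_s18 (q : ℕ) (hq : Fintype.card F = q) (f : Polynomial F) (x y : E) :
    qAssoc q f (x + y) = qAssoc q f x + qAssoc q f y := by
  simp only [qAssoc, Polynomial.sum_def]
  rw [← Finset.sum_add_distrib]
  refine Finset.sum_congr rfl fun i _ => ?_
  rw [pow_q_add q hq, mul_add]

lemma ker_card_le (q : ℕ) (hq : Fintype.card F = q) {f : Polynomial F} (hf : f ≠ 0) :
    Nat.card {w : E // qAssoc q f w = 0} ≤ q ^ f.natDegree := by
  classical
  rw [Nat.card_eq_fintype_card, Fintype.card_subtype]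
  have hq1 : 1 < q := hq ▸ Fintype.one_lt_card
  set d := f.natDegree with hd
  set P : Polynomial E := ∑ i ∈ f.support, C (algebraMap F E (f.coeff i)) * X ^ (q ^ i) with hP
  have heval : ∀ w : E, P.eval w = qAssoc q f w := by
    intro w
    rw [hP, Polynomial.eval_finset_sum]
    simp [qAssoc, Polynomial.sum_def]
  have hcoeff : P.coeff (q ^ d) = algebraMap F E f.leadingCoeff := by
    have hmem : d ∈ f.support := by
      rw [Polynomial.mem_support_iff]
      exact Polynomial.leadingCoeff_ne_zero.mpr hf
    rw [hP, Polynomial.finset_sum_coeff, Finset.sum_eq_single d]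
    · rw [Polynomial.coeff_C_mul, Polynomial.coeff_X_pow, if_pos rfl, mul_one,
        Polynomial.leadingCoeff]
    · intro i _ hne
      have : ¬ (q ^ d = q ^ i) := fun h =>
        hne ((Nat.pow_right_injective hq1 h).symm)
      simp [Polynomial.coeff_C_mul, Polynomial.coeff_X_pow, this]
    · intro h; exact absurd hmem h
  have hP0 : P ≠ 0 := by
    intro h
    rw [h] at hcoeff
    simp only [Polynomial.coeff_zero] at hcoeff
    exact Polynomial.leadingCoeff_ne_zero.mpr hf
      ((_root_.map_eq_zero (algebraMap F E)).mp hcoeff.symm)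
  have hdeg : P.natDegree ≤ q ^ d := by
    refine Polynomial.natDegree_sum_le_of_forall_le _ _ fun i hi => ?_
    refine le_trans (Polynomial.natDegree_C_mul_X_pow_le _ _) ?_
    refine Nat.pow_le_pow_right (by omega) ?_
    exact Polynomial.le_natDegree_of_mem_supp i hi
  have hsub : (Finset.univ.filter fun w : E => qAssoc q f w = 0) ⊆ P.roots.toFinset := by
    intro w hw
    rw [Multiset.mem_toFinset, Polynomial.mem_roots hP0]
    rw [Polynomial.IsRoot, heval]
    exact (Finset.mem_filter.mp hw).2
  calc (Finset.univ.filter fun w : E => qAssoc q f w = 0).card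
      ≤ P.roots.toFinset.card := Finset.card_le_card hsub
    _ ≤ Multiset.card P.roots := Multiset.toFinset_card_le _
    _ ≤ P.natDegree := Polynomial.card_roots' P
    _ ≤ q ^ d := hdeg

end Aux

section Gauss
variable {E : Type*} [Field E] [Fintype E]

lemma gauss_abs_le (η : MulChar E ℂ) (hη : η ≠ 1) (lam : AddChar E ℂ) :
    ‖gaussSum η lam‖ ≤ Real.sqrt (Fintype.card E) := by
  rcases eq_or_ne lam 1 with h | h
  · have : gaussSum η lam = 0 := by
      rw [h, gaussSum]
      simp only [AddChar.one_apply, mul_one]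
      exact MulChar.sum_eq_zero_of_ne_one hη
    rw [this]
    simp [Real.sqrt_nonneg]
  · have hprim := AddChar.IsPrimitive.of_ne_one h
    have key := gaussSum_mul_gaussSum_eq_card hη hprim
    have hconj : (starRingEnd ℂ) (gaussSum η lam) = gaussSum η⁻¹ lam⁻¹ := by
      rw [gaussSum, gaussSum, map_sum]
      refine Finset.sum_congr rfl fun a _ => ?_
      rw [map_mul]
      congr 1
      · rw [← MulChar.star_apply' η a, RCLike.star_def]
      · rw [AddChar.inv_apply', ← Complex.inv_eq_conj (by simpa using lam.norm_apply a)]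
    have habs : (‖gaussSum η lam‖) ^ 2 = (Fintype.card E : ℝ) := by
      have h2 : gaussSum η lam * (starRingEnd ℂ) (gaussSum η lam) = (Fintype.card E : ℂ) := by
        rw [hconj]; exact key
      rw [Complex.mul_conj] at h2
      rw [Complex.sq_norm]
      exact_mod_cast h2
    rw [← habs, Real.sqrt_sq (norm_nonneg _)]

end Gauss


/-- For a nontrivial multiplicative character `η` and a nontrivial additive
character `ψ` of `F_{q^n}`, and a monic divisor `f` of `x^n - 1` of degree `k`,
`|Σ_w η(L_f(w)) ψ(w)| ≤ q^{n/2+k}`. -/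
theorem stmt18 {F E : Type*} [Field F] [Fintype F] [Field E] [Fintype E] [Algebra F E]
    (q n k : ℕ) (hq : Fintype.card F = q) (hn : 0 < n) (hdim : Module.finrank F E = n)
    (f : Polynomial F) (hf : f.Monic) (hdeg : f.natDegree = k)
    (hfd : f ∣ (X ^ n - 1 : Polynomial F))
    (η : MulChar E ℂ) (hη : η ≠ 1) (ψ : AddChar E ℂ) (hψ : ψ ≠ 1) :
    ‖∑ w : E, η (qAssoc q f w) * ψ w‖ ≤
      (q : ℝ) ^ ((n : ℝ) / 2 + (k : ℝ)) := by
  classical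
  have hq1 : 1 < q := hq ▸ Fintype.one_lt_card
  have hq0 : (0:ℝ) < (q:ℝ) := by exact_mod_cast Nat.lt_of_lt_of_le Nat.zero_lt_one hq1.le
  have hcE : Fintype.card E = q ^ n := by
    rw [← hq, ← hdim]; exact Module.card_eq_pow_finrank
  have hf0 : f ≠ 0 := hf.ne_zero
  set L : E →+ E := AddMonoidHom.mk' (qAssoc q f) (qAssoc_add_s18 q hq f) with hL
  have hLapp : ∀ w, L w = qAssoc q f w := fun w => rfl
  set S := ∑ w : E, η (qAssoc q f w) * ψ w with hS
  set T : AddChar E ℂ → ℂ := fun l => ∑ w : E, l (L w) * ψ w with hT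
  -- Fourier expansion
  have key : ∑ l : AddChar E ℂ, gaussSum η l⁻¹ * T l = (Fintype.card E : ℂ) * S := by
    have h1 : ∀ l : AddChar E ℂ, gaussSum η l⁻¹ * T l
        = ∑ v : E, ∑ w : E, η v * ψ w * l (L w - v) := by
      intro l
      rw [hT, gaussSum, Finset.sum_mul_sum]
      refine Finset.sum_congr rfl fun v _ => Finset.sum_congr rfl fun w _ => ?_
      rw [AddChar.inv_apply, sub_eq_add_neg, AddChar.map_add_eq_mul]
      ring
    calc ∑ l : AddChar E ℂ, gaussSum η l⁻¹ * T l
        = ∑ l : AddChar E ℂ, ∑ v : E, ∑ w : E, η v * ψ w * l (L w - v) :=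
          Finset.sum_congr rfl fun l _ => h1 l
      _ = ∑ v : E, ∑ w : E, ∑ l : AddChar E ℂ, η v * ψ w * l (L w - v) := by
          rw [Finset.sum_comm]
          exact Finset.sum_congr rfl fun v _ => Finset.sum_comm
      _ = ∑ v : E, ∑ w : E, η v * ψ w * (if L w - v = 0 then (Fintype.card E : ℂ) else 0) := by
          refine Finset.sum_congr rfl fun v _ => Finset.sum_congr rfl fun w _ => ?_
          rw [← Finset.mul_sum, AddChar.sum_apply_eq_ite]
      _ = ∑ w : E, ∑ v : E, (if v = L w then η v * ψ w * (Fintype.card E : ℂ) else 0) := by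
          rw [Finset.sum_comm]
          refine Finset.sum_congr rfl fun w _ => Finset.sum_congr rfl fun v _ => ?_
          rw [sub_eq_zero, mul_ite, mul_zero]
          exact if_congr (by constructor <;> exact Eq.symm) rfl rfl
      _ = ∑ w : E, η (L w) * ψ w * (Fintype.card E : ℂ) := by
          refine Finset.sum_congr rfl fun w _ => ?_
          rw [Finset.sum_ite_eq' Finset.univ (L w) (fun v => η v * ψ w * (Fintype.card E : ℂ))]
          simp
      _ = (Fintype.card E : ℂ) * S := by
          simp only [hLapp]
          rw [hS, ← Finset.sum_mul, mul_comm]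
  -- value of T
  have hTval : ∀ l : AddChar E ℂ,
      T l = if l.compAddMonoidHom L * ψ = 0 then (Fintype.card E : ℂ) else 0 := by
    intro l
    have h2 : T l = ∑ w : E, (l.compAddMonoidHom L * ψ) w := by
      refine Finset.sum_congr rfl fun w _ => ?_
      rw [AddChar.mul_apply, AddChar.compAddMonoidHom_apply]
    rw [h2, AddChar.sum_eq_ite]
  set V := L.range with hV
  set A0 := Finset.univ.filter (fun l : AddChar E ℂ => l.compAddMonoidHom L = 0) with hA0
  set A := Finset.univ.filter (fun l : AddChar E ℂ => l.compAddMonoidHom L * ψ = 0) with hA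
  -- restriction to the range is trivial iff composition with L is trivial
  have hrestr : ∀ l : AddChar E ℂ,
      l.compAddMonoidHom V.subtype = 0 ↔ l.compAddMonoidHom L = 0 := by
    intro l
    constructor
    · intro h
      ext w
      have := DFunLike.congr_fun h (⟨L w, AddMonoidHom.mem_range.mpr ⟨w, rfl⟩⟩ : V)
      simpa using this
    · intro h
      ext v
      obtain ⟨w, hw⟩ := AddMonoidHom.mem_range.mp v.2
      have := DFunLike.congr_fun h w
      simp only [AddChar.compAddMonoidHom_apply, AddChar.zero_apply] at this ⊢
      rw [AddSubgroup.coe_subtype, ← hw]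
      exact this
  -- orthogonality: card A0 * card V = card E
  have horth : (A0.card : ℂ) * (Fintype.card V : ℂ) = (Fintype.card E : ℂ) := by
    have hiter : ∀ l : AddChar E ℂ,
        ∑ v : V, l (v : E) = if l ∈ A0 then (Fintype.card V : ℂ) else 0 := by
      intro l
      have h2 : ∑ v : V, l (v : E) = ∑ v : V, (l.compAddMonoidHom V.subtype) v := by
        refine Finset.sum_congr rfl fun v _ => ?_
        simp [AddChar.compAddMonoidHom_apply]
      rw [h2, AddChar.sum_eq_ite]
      refine if_congr ?_ rfl rfl
      rw [hrestr l, hA0]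
      simp
    have h3 : ∑ l : AddChar E ℂ, ∑ v : V, l (v : E)
        = (A0.card : ℂ) * (Fintype.card V : ℂ) := by
      simp_rw [hiter]
      rw [Finset.sum_ite_mem, Finset.univ_inter, Finset.sum_const, nsmul_eq_mul]
    have h4 : ∑ v : V, ∑ l : AddChar E ℂ, l (v : E) = (Fintype.card E : ℂ) := by
      have hit2 : ∀ v : V, ∑ l : AddChar E ℂ, l (v : E)
          = if v = 0 then (Fintype.card E : ℂ) else 0 := by
        intro v
        rw [AddChar.sum_apply_eq_ite]
        exact if_congr (by simp) rfl rfl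
      simp_rw [hit2]
      rw [Finset.sum_ite_eq' Finset.univ (0 : V) (fun _ => (Fintype.card E : ℂ))]
      simp
    rw [← h3, Finset.sum_comm, h4]
  have hcards : A0.card * Fintype.card V = Fintype.card E := by exact_mod_cast horth
  -- card V * card ker = card E
  have hKV : Fintype.card V * Nat.card L.ker = Fintype.card E := by
    have h1 := AddSubgroup.card_eq_card_quotient_mul_card_addSubgroup L.ker
    have h2 : Nat.card (E ⧸ L.ker) = Nat.card V :=
      Nat.card_congr (QuotientAddGroup.quotientKerEquivRange L).toEquiv
    rw [h2] at h1
    rw [← Nat.card_eq_fintype_card, ← Nat.card_eq_fintype_card, ← h1]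
  have hK : Nat.card L.ker ≤ q ^ k := by
    have he : Nat.card L.ker = Nat.card {w : E // qAssoc q f w = 0} := by
      refine Nat.card_congr (Equiv.subtypeEquivRight fun w => ?_)
      rw [AddMonoidHom.mem_ker, hLapp]
    rw [he, ← hdeg]
    exact ker_card_le q hq hf0
  have hA0card : A0.card ≤ q ^ k := by
    have hVpos : 0 < Fintype.card V := Fintype.card_pos
    have : A0.card * Fintype.card V = Nat.card L.ker * Fintype.card V := by
      rw [hcards, ← hKV, mul_comm]
    have heq : A0.card = Nat.card L.ker := Nat.eq_of_mul_eq_mul_right hVpos this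
    rw [heq]; exact hK
  -- card A ≤ card A0
  have hAcard : A.card ≤ A0.card := by
    rcases Finset.eq_empty_or_nonempty A with hAe | ⟨l0, hl0⟩
    · simp [hAe]
    · refine Finset.card_le_card_of_injOn (fun l => l * l0⁻¹) ?_ ?_
      · intro l hl
        have h1 : ∀ w, l (L w) * ψ w = 1 := fun w => by
          have h := (Finset.mem_filter.mp hl).2
          have h' := DFunLike.congr_fun h w
          simpa using h'
        have h0 : ∀ w, l0 (L w) * ψ w = 1 := fun w => by
          have h := (Finset.mem_filter.mp hl0).2
          have h' := DFunLike.congr_fun h w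
          simpa using h'
        refine Finset.mem_filter.mpr ⟨Finset.mem_univ _, ?_⟩
        ext w
        have e1 : l (L w) = (ψ w)⁻¹ := eq_inv_of_mul_eq_one_left (mul_comm (l (L w)) (ψ w) ▸ h1 w)
        have e0 : l0 (L w) = (ψ w)⁻¹ := eq_inv_of_mul_eq_one_left (mul_comm (l0 (L w)) (ψ w) ▸ h0 w)
        have hψw : ψ w ≠ 0 := by
          intro hz
          have := AddChar.norm_apply (α := ℂ) ψ w
          rw [hz] at this; simp at this
        simp only [AddChar.compAddMonoidHom_apply, AddChar.mul_apply, AddChar.inv_apply',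
          AddChar.zero_apply, e1, e0]
        field_simp
      · intro a _ b _ h
        exact mul_right_cancel h
  -- putting it together
  have habs1 : ∀ l : AddChar E ℂ, ‖gaussSum η l⁻¹ * T l‖
      ≤ Real.sqrt (Fintype.card E) * (if l ∈ A then (Fintype.card E : ℝ) else 0) := by
    intro l
    rw [norm_mul]
    have hg := gauss_abs_le η hη l⁻¹
    have hT : ‖T l‖ = (if l ∈ A then (Fintype.card E : ℝ) else 0) := by
      rw [hTval l]
      have : (l ∈ A) ↔ (l.compAddMonoidHom L * ψ = 0) := by rw [hA]; simp
      split_ifs with h h' h' <;> simp_all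
    rw [hT]
    split_ifs with h
    · exact mul_le_mul_of_nonneg_right hg (Nat.cast_nonneg _)
    · simp
  -- sum of absolute values
  have hsum_le : ‖(Fintype.card E : ℂ) * S‖
      ≤ Real.sqrt (Fintype.card E) * (A.card * Fintype.card E) := by
    rw [← key]
    refine le_trans (norm_sum_le _ _) ?_
    calc ∑ l : AddChar E ℂ, ‖gaussSum η l⁻¹ * T l‖
        ≤ ∑ l : AddChar E ℂ,
            Real.sqrt (Fintype.card E) * (if l ∈ A then (Fintype.card E : ℝ) else 0) :=
          Finset.sum_le_sum fun l _ => habs1 l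
      _ = Real.sqrt (Fintype.card E) * (A.card * Fintype.card E) := by
          rw [← Finset.mul_sum]
          congr 1
          rw [Finset.sum_ite_mem, Finset.univ_inter, Finset.sum_const, nsmul_eq_mul]
  have hcEpos : (0:ℝ) < (Fintype.card E : ℝ) := by exact_mod_cast Fintype.card_pos
  have hAbsS : ‖S‖ ≤ Real.sqrt (Fintype.card E) * A.card := by
    have h5 : ‖(Fintype.card E:ℂ) * S‖ = (Fintype.card E:ℝ) * ‖S‖ := by
      rw [norm_mul, Complex.norm_natCast]
    rw [h5] at hsum_le
    have h7 : Real.sqrt (Fintype.card E) * (A.card * Fintype.card E)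
        = (Fintype.card E:ℝ) * (Real.sqrt (Fintype.card E) * A.card) := by ring
    have h6 : (Fintype.card E:ℝ) * ‖S‖
        ≤ (Fintype.card E:ℝ) * (Real.sqrt (Fintype.card E) * A.card) := by
      rw [← h7]; exact hsum_le
    exact le_of_mul_le_mul_left h6 hcEpos
  have hAq : (A.card : ℝ) ≤ (q:ℝ) ^ (k:ℝ) := by
    rw [Real.rpow_natCast]
    exact_mod_cast hAcard.trans hA0card
  have hsqrt : Real.sqrt (Fintype.card E) = (q:ℝ) ^ ((n:ℝ)/2) := by
    rw [hcE]
    push_cast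
    rw [← Real.rpow_natCast (q:ℝ) n, Real.sqrt_eq_rpow, ← Real.rpow_mul hq0.le,
      mul_one_div]
  calc ‖S‖ ≤ Real.sqrt (Fintype.card E) * A.card := hAbsS
    _ ≤ (q:ℝ)^((n:ℝ)/2) * (q:ℝ)^(k:ℝ) := by
        rw [hsqrt]
        exact mul_le_mul_of_nonneg_left hAq (by positivity)
    _ = (q:ℝ)^((n:ℝ)/2 + (k:ℝ)) := (Real.rpow_add hq0 _ _).symm
end
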